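/- Let r1, r2, r3 > 0 be real numbers and α1, α2 ∈ ℚ. Every local maximum of M is a global maximum: if t0 ∈ ℝ and there exists δ > 0 such that M(t) ≤ M(t0) for all t with |t − t0| < δ, then M(t0) = r1 + r2 + r3 = sup_{t∈ℝ} M(t). -/

import Mathlib

noncomputable section
open Real

/-- distance from x to the lattice aℤ (for a > 0). -/
def da (a x : ℝ) : ℝ := |x - a * round (x / a)|

lemma round_min (r : ℝ) (k : ℤ) : |r - round r| ≤ |r - k| := by
  rcases eq_or_ne k (round r) with rfl | hk
  · exact le_rfl
  · have h1 : |r - round r| ≤ 1/2 := abs_sub_round r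
    have h2 : (1:ℝ) ≤ |(round r : ℝ) - k| := by
      have hne : (1:ℤ) ≤ |round r - k| := by rcases abs_cases (round r - k) with ⟨h,_⟩|⟨h,_⟩ <;> omega
      calc (1:ℝ) = ((1:ℤ):ℝ) := by norm_num
        _ ≤ |((round r - k : ℤ) : ℝ)| := by
            rw [← Int.cast_abs]; exact_mod_cast hne
        _ = |(round r : ℝ) - k| := by push_cast; ring_nf
    have h3 : |(round r:ℝ) - k| ≤ |r - k| + |r - round r| := by
      calc |(round r:ℝ) - k| = |(r - k) - (r - round r)| := by ring_nf
        _ ≤ |r - k| + |r - round r| := abs_sub _ _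
    linarith

lemma mul_abs_eq (a u : ℝ) (ha : 0 < a) : a * |u| = |a * u| := by
  rw [abs_mul, abs_of_pos ha]

lemma da_nonneg (a x : ℝ) : 0 ≤ da a x := abs_nonneg _

lemma da_le (a x : ℝ) (ha : 0 < a) (k : ℤ) : da a x ≤ |x - k * a| := by
  have h := round_min (x / a) k
  have key : a * |x/a - round (x/a)| ≤ a * |x/a - k| :=
    mul_le_mul_of_nonneg_left h ha.le
  rw [mul_abs_eq _ _ ha, mul_abs_eq _ _ ha] at key
  have e1 : a * (x/a - round (x/a)) = x - a * round (x/a) := by field_simp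
  have e2 : a * (x/a - k) = x - k * a := by field_simp
  rw [e1, e2] at key
  exact key

lemma da_le_half (a x : ℝ) (ha : 0 < a) : da a x ≤ a / 2 := by
  have h := abs_sub_round (x / a)
  have key : a * |x/a - round (x/a)| ≤ a * (1/2) :=
    mul_le_mul_of_nonneg_left h ha.le
  rw [mul_abs_eq _ _ ha] at key
  have e1 : a * (x/a - round (x/a)) = x - a * round (x/a) := by field_simp
  rw [e1] at key
  rw [da]; linarith

lemma da_rep (a x : ℝ) : ∃ k : ℤ, |x - k * a| = da a x :=
  ⟨round (x / a), by rw [da]; ring_nf⟩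

lemma da_le_abs (a x : ℝ) (ha : 0 < a) : da a x ≤ |x| := by
  simpa using da_le a x ha 0

lemma da_lattice (a : ℝ) (ha : 0 < a) (k : ℤ) : da a (k * a) = 0 := by
  have h1 := da_le a (k*a) ha k
  have h2 := da_nonneg a (k*a)
  simp at h1; linarith

/-- f is even, periodic w.r.t. aℤ and strictly unimodal: it depends only on
`da a ·` and is strictly decreasing in it. -/
def IsUni (a : ℝ) (f : ℝ → ℝ) : Prop :=
  ∀ x y : ℝ, (da a x ≤ da a y → f y ≤ f x) ∧ (da a x < da a y → f y < f x)

lemma IsUni.mono {a f} (h : IsUni a f) {x y} (hxy : da a x ≤ da a y) : f y ≤ f x :=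
  (h x y).1 hxy

lemma IsUni.strict {a f} (h : IsUni a f) {x y} (hxy : da a x < da a y) : f y < f x :=
  (h x y).2 hxy

/-- splitting a displacement into two pieces -/
lemma split_disp (w A B : ℝ) (hA : 0 ≤ A) (hB : 0 ≤ B) (hw : |w| ≤ A + B) :
    ∃ w1 w2 : ℝ, w = w1 + w2 ∧ |w1| ≤ A ∧ |w2| ≤ B ∧ |w1| + |w2| ≤ |w| := by
  rcases le_or_gt |w| A with h | h
  · exact ⟨w, 0, by ring, h, by simpa using hB, by simp⟩
  · rcases le_or_gt 0 w with hw0 | hw0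
    · have hwa : |w| = w := abs_of_nonneg hw0
      refine ⟨A, w - A, by ring, ?_, ?_, ?_⟩
      · rw [abs_of_nonneg hA]
      · rw [abs_of_nonneg (by linarith [hwa ▸ h])]; linarith [hwa ▸ hw]
      · rw [abs_of_nonneg hA, abs_of_nonneg (by linarith [hwa ▸ h])]; linarith
    · have hwa : |w| = -w := abs_of_neg hw0
      refine ⟨-A, w + A, by ring, ?_, ?_, ?_⟩
      · rw [abs_neg, abs_of_nonneg hA]
      · rw [abs_of_nonpos (by linarith [hwa ▸ h])]; linarith [hwa ▸ hw]
      · rw [abs_neg, abs_of_nonneg hA, abs_of_nonpos (by linarith [hwa ▸ h])]; linarith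

/-- The key lemma: the sup-convolution of two strictly unimodal periodic functions
(w.r.t. lattices aℤ, bℤ with aℤ + bℤ = cℤ) is strictly unimodal w.r.t. cℤ,
provided the sup is attained. -/
lemma supconv_uni (a b c : ℝ) (ha : 0 < a) (hb : 0 < b) (hc : 0 < c)
    (f g h : ℝ → ℝ)
    (hlat1 : ∀ m n : ℤ, ∃ k : ℤ, (m:ℝ)*a + (n:ℝ)*b = (k:ℝ)*c)
    (hlat2 : ∀ k : ℤ, ∃ m n : ℤ, (k:ℝ)*c = (m:ℝ)*a + (n:ℝ)*b)
    (hf : IsUni a f) (hg : IsUni b g)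
    (hh : ∀ t, ∃ u, (∀ u', f u' + g (t - u') ≤ f u + g (t - u)) ∧
          h t = f u + g (t - u)) :
    IsUni c h := by
  have main : ∀ x y : ℝ, da c x ≤ da c y →
      h y ≤ h x ∧ (da c x < da c y → h y < h x) := by
    intro x y hxy
    obtain ⟨u, hu_max, hu_eq⟩ := hh y
    obtain ⟨u', hu'_max, hu'_eq⟩ := hh x
    set A := da a u with hAdef
    set B := da b (y - u) with hBdef
    obtain ⟨m, hm⟩ := da_rep a u
    obtain ⟨n, hn⟩ := da_rep b (y - u)
    obtain ⟨k0, hk0⟩ := hlat1 m n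
    have hy_close : da c y ≤ A + B := by
      have h1 : da c y ≤ |y - k0 * c| := da_le c y hc k0
      have h2 : |y - k0 * c| = |(u - m*a) + ((y-u) - n*b)| := by
        rw [← hk0]; ring_nf
      have h3 : |(u - m*a) + ((y-u) - n*b)| ≤ |u - m*a| + |(y-u) - n*b| := abs_add_le _ _
      rw [hm, hn] at h3
      rw [h2] at h1
      linarith
    obtain ⟨k', hk'⟩ := da_rep c x
    obtain ⟨m', n', hmn'⟩ := hlat2 k'
    set w := x - (k':ℝ) * c with hwdef
    have hwabs : |w| = da c x := hk'
    have hwAB : |w| ≤ A + B := by rw [hwabs]; linarith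
    obtain ⟨w1, w2, hw12, hw1, hw2, hw_sum⟩ :=
      split_disp w A B (da_nonneg a u) (da_nonneg b (y-u)) hwAB
    set u1 := (m':ℝ) * a + w1 with hu1def
    set v1 := (n':ℝ) * b + w2 with hv1def
    have hx_eq : x = u1 + v1 := by
      have h5 : x - (k':ℝ)*c = w1 + w2 := by rw [← hwdef, hw12]
      have h6 : u1 + v1 = (m':ℝ)*a + (n':ℝ)*b + (w1 + w2) := by
        rw [hu1def, hv1def]; ring
      rw [h6, ← hmn']; linarith
    have hda_u1 : da a u1 ≤ |w1| := by
      have h7 := da_le a u1 ha m'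
      have h8 : u1 - (m':ℝ)*a = w1 := by rw [hu1def]; ring
      rwa [h8] at h7
    have hda_v1 : da b v1 ≤ |w2| := by
      have h7 := da_le b v1 hb n'
      have h8 : v1 - (n':ℝ)*b = w2 := by rw [hv1def]; ring
      rwa [h8] at h7
    have hfu1 : f u ≤ f u1 := hf.mono (le_trans hda_u1 hw1)
    have hgv1 : g (y - u) ≤ g v1 := hg.mono (le_trans hda_v1 hw2)
    have hxv : x - u1 = v1 := by rw [hx_eq]; ring
    have hcomp : f u1 + g v1 ≤ h x := by
      rw [hu'_eq, ← hxv]; exact hu'_max u1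
    constructor
    · rw [hu_eq]; linarith
    · intro hlt
      have hstrictsum : |w1| + |w2| < A + B := by
        have : |w| < A + B := by rw [hwabs]; linarith
        linarith
      have hkey : f u + g (y - u) < f u1 + g v1 := by
        rcases lt_or_ge |w1| A with h1 | h1
        · have : f u < f u1 := hf.strict (lt_of_le_of_lt hda_u1 h1)
          linarith
        · have h2 : |w2| < B := by linarith
          have : g (y - u) < g v1 := hg.strict (lt_of_le_of_lt hda_v1 h2)
          linarith
      rw [hu_eq]; linarith
  intro x y
  refine ⟨fun hxy => (main x y hxy).1, fun hxy => (main x y hxy.le).2 hxy⟩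

/-! ### concrete unimodal cosine functions -/

/-- `ff r α u = r cos (u / α)`, period `2π α`, unimodal w.r.t. lattice `2π|α| ℤ`. -/
def ff (r α : ℝ) : ℝ → ℝ := fun u => r * cos (u / α)

lemma cos_lip (x y : ℝ) : cos x ≤ cos y + |x - y| := by
  have h1 : cos x - cos y = -2 * sin ((x+y)/2) * sin ((x-y)/2) := cos_sub_cos x y
  have h2 : |sin ((x+y)/2)| ≤ 1 := abs_sin_le_one _
  have h3 : |sin ((x-y)/2)| ≤ |(x-y)/2| := abs_sin_le_abs
  have h4 : cos x - cos y ≤ 2 * |sin ((x+y)/2)| * |sin ((x-y)/2)| := by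
    rw [h1]
    calc -2 * sin ((x+y)/2) * sin ((x-y)/2) ≤ |(-2) * sin ((x+y)/2) * sin ((x-y)/2)| :=
          le_abs_self _
      _ = 2 * |sin ((x+y)/2)| * |sin ((x-y)/2)| := by
          rw [abs_mul, abs_mul]; norm_num
  have h5 : 2 * |sin ((x+y)/2)| * |sin ((x-y)/2)| ≤ 2 * 1 * |(x-y)/2| := by
    apply mul_le_mul
    · apply mul_le_mul_of_nonneg_left h2; norm_num
    · exact h3
    · exact abs_nonneg _
    · norm_num
  have h6 : (2:ℝ) * 1 * |(x-y)/2| = |x - y| := by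
    rw [abs_div]; norm_num; ring
  linarith

lemma ff_lip (r α : ℝ) (hr : 0 < r) (hα : α ≠ 0) (x y : ℝ) :
    ff r α x ≤ ff r α y + (r / |α|) * |x - y| := by
  have h := cos_lip (x / α) (y / α)
  have h2 : |x/α - y/α| = |x - y| / |α| := by
    rw [← abs_div]; congr 1; field_simp
  rw [h2] at h
  have := mul_le_mul_of_nonneg_left h hr.le
  rw [ff, ff]
  calc r * cos (x/α) ≤ r * (cos (y/α) + |x-y|/|α|) := this
    _ = r * cos (y/α) + r / |α| * |x - y| := by ring

lemma ff_le (r α : ℝ) (hr : 0 < r) (u : ℝ) : ff r α u ≤ r := by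
  rw [ff]
  nlinarith [cos_le_one (u / α)]

/-- the key structural fact: `ff r α u` only depends on `da (2π|α|) u`, decreasingly. -/
lemma ff_eq_cos_da (r α : ℝ) (hα : α ≠ 0) (u : ℝ) :
    ff r α u = r * cos (da (2 * π * |α|) u / |α|) := by
  set a := 2 * π * |α| with hadef
  have ha : 0 < a := by positivity
  obtain ⟨k, hk⟩ := da_rep a u
  have key : cos (u / α) = cos ((u - k * a) / α) := by
    have : u / α = (u - k * a) / α + (k * (a / α)) := by field_simp; try ring
    rw [this]
    rcases abs_cases α with ⟨h1, _⟩ | ⟨h1, _⟩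
    · have : a / α = 2 * π := by rw [hadef, h1]; field_simp; try ring
      rw [this]
      have := cos_add_int_mul_two_pi ((u - k * a)/α) k
      convert this using 2 <;> try ring
    · have : a / α = -(2 * π) := by rw [hadef, h1]; field_simp; try ring
      rw [this]
      have := cos_add_int_mul_two_pi ((u - k * a)/α) (-k)
      convert this using 2 <;> try (push_cast; ring)
  have key2 : cos ((u - k * a) / α) = cos (|u - k * a| / |α|) := by
    rw [← abs_div, cos_abs]
  rw [ff, key, key2, hk]

lemma isUni_ff (r α : ℝ) (hr : 0 < r) (hα : α ≠ 0) :
    IsUni (2 * π * |α|) (ff r α) := by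
  set a := 2 * π * |α| with hadef
  have ha : 0 < a := by positivity
  have hαpos : 0 < |α| := abs_pos.mpr hα
  have harg : ∀ x : ℝ, da a x / |α| ∈ Set.Icc 0 π := by
    intro x
    constructor
    · exact div_nonneg (da_nonneg _ _) hαpos.le
    · rw [div_le_iff₀ hαpos]
      have := da_le_half a x ha
      rw [hadef] at this ⊢
      nlinarith [pi_pos]
  intro x y
  constructor
  · intro hxy
    rw [ff_eq_cos_da r α hα x, ff_eq_cos_da r α hα y]
    have : cos (da a y / |α|) ≤ cos (da a x / |α|) := by
      apply cos_le_cos_of_nonneg_of_le_pi (harg x).1 (harg y).2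
      exact (div_le_div_iff_of_pos_right hαpos).mpr hxy
    nlinarith
  · intro hxy
    rw [ff_eq_cos_da r α hα x, ff_eq_cos_da r α hα y]
    have : cos (da a y / |α|) < cos (da a x / |α|) := by
      apply strictAntiOn_cos (harg x) (harg y)
      exact (div_lt_div_iff_of_pos_right hαpos).mpr hxy
    nlinarith

/-! ### periodic functions attain their sup -/

lemma per_int (F : ℝ → ℝ) (P : ℝ) (h : ∀ x, F (x + P) = F x) :
    ∀ (k : ℤ) (x : ℝ), F (x + k * P) = F x := by
  intro k
  induction k using Int.induction_on with
  | zero => simp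
  | succ n ih => intro x
                 have e : x + (((n:ℤ) + 1 : ℤ) : ℝ) * P = (x + (((n:ℤ) : ℤ) : ℝ) * P) + P := by
                   push_cast; ring
                 rw [e, h, ih]
  | pred n ih => intro x
                 have e : x + ((-(n:ℤ) - 1 : ℤ) : ℝ) * P + P = x + ((-(n:ℤ) : ℤ) : ℝ) * P := by
                   push_cast; ring
                 rw [← ih x, ← e, h]

lemma exists_max_periodic (F : ℝ → ℝ) (hF : Continuous F) (P : ℝ) (hP : 0 < P)
    (hper : ∀ x, F (x + P) = F x) : ∃ x0, ∀ x, F x ≤ F x0 := by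
  obtain ⟨x0, _, hx0⟩ := (isCompact_Icc (a := (0:ℝ)) (b := P)).exists_isMaxOn
    (Set.nonempty_Icc.mpr hP.le) hF.continuousOn
  refine ⟨x0, fun x => ?_⟩
  have hx : x - ⌊x / P⌋ * P ∈ Set.Icc (0:ℝ) P := by
    constructor
    · have := Int.floor_le (x / P)
      have h2 : (⌊x / P⌋ : ℝ) * P ≤ x / P * P := mul_le_mul_of_nonneg_right this hP.le
      rw [div_mul_cancel₀ _ hP.ne'] at h2
      linarith
    · have := Int.lt_floor_add_one (x / P)
      have h2 : x / P * P < ((⌊x / P⌋ : ℝ) + 1) * P := mul_lt_mul_of_pos_right this hP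
      rw [div_mul_cancel₀ _ hP.ne'] at h2
      nlinarith
  have : F (x - ⌊x / P⌋ * P) = F x := by
    have := per_int F P hper ⌊x / P⌋ (x - ⌊x / P⌋ * P)
    rw [← this]; congr 1; ring
  rw [← this]
  exact hx0 hx

/-! ### sup-convolution -/

def SC (f g : ℝ → ℝ) (t : ℝ) : ℝ := sSup {v | ∃ u, v = f u + g (t - u)}

lemma SC_bddAbove (f g : ℝ → ℝ) (Bf Bg : ℝ) (hbf : ∀ u, f u ≤ Bf) (hbg : ∀ u, g u ≤ Bg)
    (t : ℝ) : BddAbove {v | ∃ u, v = f u + g (t - u)} := by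
  refine ⟨Bf + Bg, ?_⟩
  rintro v ⟨u, rfl⟩
  exact add_le_add (hbf u) (hbg _)

lemma le_SC (f g : ℝ → ℝ) (Bf Bg : ℝ) (hbf : ∀ u, f u ≤ Bf) (hbg : ∀ u, g u ≤ Bg)
    (t u : ℝ) : f u + g (t - u) ≤ SC f g t :=
  le_csSup (SC_bddAbove f g Bf Bg hbf hbg t) ⟨u, rfl⟩

lemma SC_le (f g : ℝ → ℝ) (t B : ℝ) (h : ∀ u, f u + g (t - u) ≤ B) : SC f g t ≤ B :=
  csSup_le ⟨f 0 + g (t - 0), ⟨0, rfl⟩⟩ (by rintro v ⟨u, rfl⟩; exact h u)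

lemma SC_eq_of_max (f g : ℝ → ℝ) (t u0 : ℝ)
    (h : ∀ u, f u + g (t - u) ≤ f u0 + g (t - u0)) :
    SC f g t = f u0 + g (t - u0) := by
  refine le_antisymm (SC_le f g t _ h) (le_csSup ⟨f u0 + g (t - u0), ?_⟩ ⟨u0, rfl⟩)
  rintro v ⟨u, rfl⟩; exact h u

lemma SC_exists_max (f g : ℝ → ℝ) (hf : Continuous f) (hg : Continuous g)
    (P : ℝ) (hP : 0 < P) (hpf : ∀ x, f (x + P) = f x) (hpg : ∀ x, g (x + P) = g x)
    (t : ℝ) :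
    ∃ u, (∀ u', f u' + g (t - u') ≤ f u + g (t - u)) ∧ SC f g t = f u + g (t - u) := by
  set F : ℝ → ℝ := fun u => f u + g (t - u) with hF
  have hFc : Continuous F := by fun_prop
  have hFper : ∀ x, F (x + P) = F x := by
    intro x
    have h1 : f (x + P) = f x := hpf x
    have h2 : g (t - (x + P)) = g (t - x) := by
      have := hpg (t - (x + P))
      rw [show t - (x + P) + P = t - x by ring] at this
      exact this.symm
    simp only [hF, h1, h2]
  obtain ⟨u0, hu0⟩ := exists_max_periodic F hFc P hP hFper
  exact ⟨u0, hu0, SC_eq_of_max f g t u0 hu0⟩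

lemma SC_per (f g : ℝ → ℝ) (P : ℝ) (hpf : ∀ x, f (x + P) = f x)
    (hpg : ∀ x, g (x + P) = g x) (t : ℝ) : SC f g (t + P) = SC f g t := by
  unfold SC
  congr 1
  ext v
  constructor
  · rintro ⟨u, rfl⟩
    refine ⟨u - P, ?_⟩
    have h1 : f (u - P + P) = f (u - P) := hpf (u - P)
    rw [show u - P + P = u by ring] at h1
    rw [← h1]
    congr 2
    ring
  · rintro ⟨u, rfl⟩
    refine ⟨u + P, ?_⟩
    rw [hpf u]
    congr 2
    ring

lemma SC_continuous (f g : ℝ → ℝ) (L Bf Bg : ℝ) (hL : 0 ≤ L)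
    (hbf : ∀ u, f u ≤ Bf) (hbg : ∀ u, g u ≤ Bg)
    (hlip : ∀ x y, g x ≤ g y + L * |x - y|) : Continuous (SC f g) := by
  have key : ∀ w w', SC f g w ≤ SC f g w' + L * |w - w'| := by
    intro w w'
    apply SC_le
    intro u
    have h1 : g (w - u) ≤ g (w' - u) + L * |w - w'| := by
      have := hlip (w - u) (w' - u)
      rw [show w - u - (w' - u) = w - w' by ring] at this
      exact this
    have h2 : f u + g (w' - u) ≤ SC f g w' := le_SC f g Bf Bg hbf hbg w' u
    linarith
  have : LipschitzWith (Real.toNNReal L) (SC f g) := by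
    apply LipschitzWith.of_le_add_mul'
    intro x y
    rw [Real.dist_eq]
    exact key x y
  exact this.continuous

/-- periodicity of `ff` -/
lemma ff_per (r α P : ℝ) (hα : α ≠ 0) (k : ℤ) (hk : P = k * (2 * π) * α) :
    ∀ x, ff r α (x + P) = ff r α x := by
  intro x
  rw [ff, ff]
  congr 1
  have : (x + P) / α = x / α + k * (2 * π) := by rw [hk]; field_simp; try ring
  rw [this, cos_add_int_mul_two_pi]

/-! ### lattice arithmetic -/

lemma gcd_abs (x y : ℤ) : Int.gcd |x| |y| = Int.gcd x y := by
  unfold Int.gcd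
  rw [Int.natAbs_abs, Int.natAbs_abs]

lemma intlat1 (x y m n : ℤ) : ∃ k : ℤ, m * |x| + n * |y| = k * (Int.gcd x y : ℤ) := by
  obtain ⟨c1, hc1⟩ : ((Int.gcd x y : ℤ)) ∣ |x| := (dvd_abs _ _).mpr (Int.gcd_dvd_left x y)
  obtain ⟨c2, hc2⟩ : ((Int.gcd x y : ℤ)) ∣ |y| := (dvd_abs _ _).mpr (Int.gcd_dvd_right x y)
  exact ⟨m * c1 + n * c2, by rw [hc1, hc2]; ring⟩

lemma intlat2 (x y k : ℤ) : ∃ m n : ℤ, k * (Int.gcd x y : ℤ) = m * |x| + n * |y| := by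
  have hbez := Int.gcd_eq_gcd_ab |x| |y|
  rw [gcd_abs] at hbez
  exact ⟨k * Int.gcdA |x| |y|, k * Int.gcdB |x| |y|, by rw [hbez]; ring⟩

/-- the real-cast lattice facts used by `supconv_uni` -/
lemma latR1 (x y : ℤ) (q : ℤ) (hq : 0 < q) (m n : ℤ) :
    ∃ k : ℤ, (m:ℝ) * (2 * π * |(x:ℝ)| / q) + (n:ℝ) * (2 * π * |(y:ℝ)| / q)
      = (k:ℝ) * (2 * π * (Int.gcd x y : ℝ) / q) := by
  obtain ⟨k, hk⟩ := intlat1 x y m n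
  refine ⟨k, ?_⟩
  have e : ((m * |x| + n * |y| : ℤ) : ℝ) = ((k * (Int.gcd x y : ℤ) : ℤ) : ℝ) := by
    exact_mod_cast congrArg (fun z : ℤ => (z:ℝ)) hk
  push_cast at e
  have hqne : (q:ℝ) ≠ 0 := by positivity
  field_simp
  linear_combination e

lemma latR2 (x y : ℤ) (q : ℤ) (hq : 0 < q) (k : ℤ) :
    ∃ m n : ℤ, (k:ℝ) * (2 * π * (Int.gcd x y : ℝ) / q)
      = (m:ℝ) * (2 * π * |(x:ℝ)| / q) + (n:ℝ) * (2 * π * |(y:ℝ)| / q) := by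
  obtain ⟨m, n, hk⟩ := intlat2 x y k
  refine ⟨m, n, ?_⟩
  have e : ((k * (Int.gcd x y : ℤ) : ℤ) : ℝ) = ((m * |x| + n * |y| : ℤ) : ℝ) := by
    exact_mod_cast congrArg (fun z : ℤ => (z:ℝ)) hk
  push_cast at e
  have hqne : (q:ℝ) ≠ 0 := by positivity
  field_simp
  linear_combination e

/-! ### the sup function in two angle variables -/

def MF (r1 r2 r3 A1 A2 : ℝ) (t : ℝ) : ℝ :=
  sSup {v : ℝ | ∃ θ1 θ2 : ℝ, v = r1 * cos θ1 + r2 * cos θ2 + r3 * cos (A1 * θ1 + A2 * θ2 + t)}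

lemma MF_bddAbove (r1 r2 r3 A1 A2 : ℝ) (hr1 : 0 < r1) (hr2 : 0 < r2) (hr3 : 0 < r3) (t : ℝ) :
    BddAbove {v : ℝ | ∃ θ1 θ2 : ℝ,
      v = r1 * cos θ1 + r2 * cos θ2 + r3 * cos (A1 * θ1 + A2 * θ2 + t)} := by
  refine ⟨r1 + r2 + r3, ?_⟩
  rintro v ⟨θ1, θ2, rfl⟩
  have c1 := cos_le_one θ1
  have c2 := cos_le_one θ2
  have c3 := cos_le_one (A1 * θ1 + A2 * θ2 + t)
  nlinarith

lemma MF_le (r1 r2 r3 A1 A2 : ℝ) (hr1 : 0 < r1) (hr2 : 0 < r2) (hr3 : 0 < r3) (t : ℝ) :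
    MF r1 r2 r3 A1 A2 t ≤ r1 + r2 + r3 := by
  unfold MF
  refine csSup_le ⟨_, 0, 0, rfl⟩ ?_
  rintro v ⟨θ1, θ2, rfl⟩
  have c1 := cos_le_one θ1
  have c2 := cos_le_one θ2
  have c3 := cos_le_one (A1 * θ1 + A2 * θ2 + t)
  nlinarith

lemma MF_swap (r1 r2 r3 A1 A2 : ℝ) (t : ℝ) :
    MF r1 r2 r3 A1 A2 t = MF r2 r1 r3 A2 A1 t := by
  unfold MF
  congr 1
  ext v
  constructor
  · rintro ⟨θ1, θ2, rfl⟩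
    exact ⟨θ2, θ1, by ring_nf⟩
  · rintro ⟨θ1, θ2, rfl⟩
    exact ⟨θ2, θ1, by ring_nf⟩

lemma IsUni.const_add {c : ℝ} {f : ℝ → ℝ} (k : ℝ) (h : IsUni c f) :
    IsUni c (fun t => k + f t) := by
  intro x y
  exact ⟨fun hxy => by simpa using (h x y).1 hxy, fun hxy => by simpa using (h x y).2 hxy⟩

lemma isUni_congr {c : ℝ} {f g : ℝ → ℝ} (h : ∀ t, f t = g t) (hg : IsUni c g) : IsUni c f := by
  intro x y
  rw [h x, h y]
  exact hg x y

/-- period of `ff r (p/q)` : `2π |p j|` for any integer j -/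
lemma ff_per_pq (r : ℝ) (p q j : ℤ) (hq : 0 < q) (hp : p ≠ 0) (A : ℝ) (hA : A = (p:ℝ) / (q:ℝ)) :
    ∀ x, ff r A (x + 2 * π * |((p * j : ℤ) : ℝ)|) = ff r A x := by
  have hqR : (q:ℝ) ≠ 0 := by positivity
  have hAne : A ≠ 0 := by
    rw [hA]
    exact div_ne_zero (Int.cast_ne_zero.mpr hp) hqR
  rcases le_or_gt 0 ((p * j : ℤ)) with hs | hs
  · apply ff_per r A _ hAne (j * q)
    have : |((p * j : ℤ) : ℝ)| = ((p * j : ℤ) : ℝ) := by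
      rw [abs_of_nonneg]; exact_mod_cast hs
    rw [this, hA]; push_cast; field_simp
  · apply ff_per r A _ hAne (-(j * q))
    have : |((p * j : ℤ) : ℝ)| = -((p * j : ℤ) : ℝ) := by
      rw [abs_of_neg]; exact_mod_cast hs
    rw [this, hA]; push_cast; field_simp

lemma isUni_ff1 (r : ℝ) (hr : 0 < r) : IsUni (2 * π) (ff r 1) := by
  have h := isUni_ff r 1 hr one_ne_zero
  simpa using h

lemma uni_caseA (r1 r2 r3 : ℝ) (hr1 : 0 < r1) (hr2 : 0 < r2) (hr3 : 0 < r3)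
    (A1 A2 : ℝ) (p1 p2 q : ℤ) (hq : 0 < q) (hp1 : p1 ≠ 0) (hp2 : p2 ≠ 0)
    (hA1 : A1 = (p1:ℝ)/(q:ℝ)) (hA2 : A2 = (p2:ℝ)/(q:ℝ)) :
    ∃ c, 0 < c ∧ IsUni c (MF r1 r2 r3 A1 A2) := by
  have hqR : (0:ℝ) < (q:ℝ) := by exact_mod_cast hq
  have hqne : (q:ℝ) ≠ 0 := hqR.ne'
  have hA1ne : A1 ≠ 0 := by rw [hA1]; exact div_ne_zero (Int.cast_ne_zero.mpr hp1) hqne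
  have hA2ne : A2 ≠ 0 := by rw [hA2]; exact div_ne_zero (Int.cast_ne_zero.mpr hp2) hqne
  have hb1 : ∀ u, ff r1 A1 u ≤ r1 := ff_le r1 A1 hr1
  have hb2 : ∀ u, ff r2 A2 u ≤ r2 := ff_le r2 A2 hr2
  have hb3 : ∀ u, ff r3 1 u ≤ r3 := ff_le r3 1 hr3
  have cont1 : Continuous (ff r1 A1) := by unfold ff; fun_prop
  have cont2 : Continuous (ff r2 A2) := by unfold ff; fun_prop
  have cont3 : Continuous (ff r3 1) := by unfold ff; fun_prop
  set P := 2 * π * |((p1 * p2 : ℤ) : ℝ)| with hPdef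
  have hPpos : 0 < P := by
    have : ((p1 * p2 : ℤ) : ℝ) ≠ 0 := Int.cast_ne_zero.mpr (mul_ne_zero hp1 hp2)
    have := abs_pos.mpr this
    have := pi_pos
    positivity
  have per1 : ∀ x, ff r1 A1 (x + P) = ff r1 A1 x := ff_per_pq r1 p1 q p2 hq hp1 A1 hA1
  have per2 : ∀ x, ff r2 A2 (x + P) = ff r2 A2 x := by
    have h := ff_per_pq r2 p2 q p1 hq hp2 A2 hA2
    rw [show (p2 * p1 : ℤ) = p1 * p2 from mul_comm _ _] at h
    exact h
  have per3 : ∀ x, ff r3 1 (x + P) = ff r3 1 x := by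
    have h := ff_per_pq r3 1 1 (p1 * p2) one_pos one_ne_zero 1 (by norm_num)
    rw [show (1 * (p1 * p2) : ℤ) = p1 * p2 from one_mul _] at h
    exact h
  -- the inner sup-convolution
  have hh1 := SC_exists_max (ff r1 A1) (ff r2 A2) cont1 cont2 P hPpos per1 per2
  have hbH1 : ∀ w, SC (ff r1 A1) (ff r2 A2) w ≤ r1 + r2 := fun w =>
    SC_le _ _ w (r1 + r2) (fun u => add_le_add (hb1 u) (hb2 _))
  -- unimodality data for f1 f2
  have e_a1 : 2 * π * |A1| = 2 * π * |(p1:ℝ)| / (q:ℝ) := by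
    rw [hA1, abs_div, abs_of_pos hqR]; ring
  have e_a2 : 2 * π * |A2| = 2 * π * |(p2:ℝ)| / (q:ℝ) := by
    rw [hA2, abs_div, abs_of_pos hqR]; ring
  have uni1 : IsUni (2 * π * |(p1:ℝ)| / (q:ℝ)) (ff r1 A1) := by
    rw [← e_a1]; exact isUni_ff r1 A1 hr1 hA1ne
  have uni2 : IsUni (2 * π * |(p2:ℝ)| / (q:ℝ)) (ff r2 A2) := by
    rw [← e_a2]; exact isUni_ff r2 A2 hr2 hA2ne
  have ha1pos : 0 < 2 * π * |(p1:ℝ)| / (q:ℝ) := by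
    have : |(p1:ℝ)| > 0 := abs_pos.mpr (Int.cast_ne_zero.mpr hp1)
    have := pi_pos
    positivity
  have ha2pos : 0 < 2 * π * |(p2:ℝ)| / (q:ℝ) := by
    have : |(p2:ℝ)| > 0 := abs_pos.mpr (Int.cast_ne_zero.mpr hp2)
    have := pi_pos
    positivity
  have hc1pos : 0 < 2 * π * (Int.gcd p1 p2 : ℝ) / (q:ℝ) := by
    have hgne : Int.gcd p1 p2 ≠ 0 := fun h0 => hp1 (Int.gcd_eq_zero_iff.mp h0).1
    have : (0:ℝ) < (Int.gcd p1 p2 : ℝ) := by exact_mod_cast Nat.pos_of_ne_zero hgne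
    have := pi_pos
    positivity
  have uniH1 : IsUni (2 * π * (Int.gcd p1 p2 : ℝ) / (q:ℝ)) (SC (ff r1 A1) (ff r2 A2)) := by
    apply supconv_uni (2 * π * |(p1:ℝ)| / (q:ℝ)) (2 * π * |(p2:ℝ)| / (q:ℝ)) _
      ha1pos ha2pos hc1pos _ _ _ (latR1 p1 p2 q hq) (latR2 p1 p2 q hq) uni1 uni2 hh1
  -- outer sup-convolution
  have contH1 : Continuous (SC (ff r1 A1) (ff r2 A2)) := by
    apply SC_continuous (ff r1 A1) (ff r2 A2) (r2 / |A2|) r1 r2 _ hb1 hb2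
      (ff_lip r2 A2 hr2 hA2ne)
    positivity
  have perH1 : ∀ x, SC (ff r1 A1) (ff r2 A2) (x + P) = SC (ff r1 A1) (ff r2 A2) x :=
    SC_per (ff r1 A1) (ff r2 A2) P per1 per2
  have hhO := SC_exists_max (SC (ff r1 A1) (ff r2 A2)) (ff r3 1) contH1 cont3 P hPpos perH1 per3
  -- lattice data for the outer convolution
  set G1 : ℤ := (Int.gcd p1 p2 : ℤ) with hG1def
  have eGa : 2 * π * |((G1:ℤ):ℝ)| / (q:ℝ) = 2 * π * (Int.gcd p1 p2 : ℝ) / (q:ℝ) := by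
    rw [hG1def]; push_cast; rw [abs_of_nonneg (by positivity)]
  have eGb : 2 * π * |((q:ℤ):ℝ)| / (q:ℝ) = 2 * π := by
    rw [abs_of_pos hqR]; field_simp
  have latO1 : ∀ m n : ℤ, ∃ k : ℤ,
      (m:ℝ) * (2 * π * (Int.gcd p1 p2 : ℝ) / (q:ℝ)) + (n:ℝ) * (2 * π)
        = (k:ℝ) * (2 * π * (Int.gcd G1 q : ℝ) / (q:ℝ)) := by
    intro m n
    obtain ⟨k, hk⟩ := latR1 G1 q q hq m n
    rw [eGa, eGb] at hk
    exact ⟨k, hk⟩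
  have latO2 : ∀ k : ℤ, ∃ m n : ℤ,
      (k:ℝ) * (2 * π * (Int.gcd G1 q : ℝ) / (q:ℝ))
        = (m:ℝ) * (2 * π * (Int.gcd p1 p2 : ℝ) / (q:ℝ)) + (n:ℝ) * (2 * π) := by
    intro k
    obtain ⟨m, n, hk⟩ := latR2 G1 q q hq k
    rw [eGa, eGb] at hk
    exact ⟨m, n, hk⟩
  have hcpos : 0 < 2 * π * (Int.gcd G1 q : ℝ) / (q:ℝ) := by
    have hgne : Int.gcd G1 q ≠ 0 := fun h0 => hq.ne' (Int.gcd_eq_zero_iff.mp h0).2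
    have : (0:ℝ) < (Int.gcd G1 q : ℝ) := by exact_mod_cast Nat.pos_of_ne_zero hgne
    have := pi_pos
    positivity
  have uniM : IsUni (2 * π * (Int.gcd G1 q : ℝ) / (q:ℝ))
      (SC (SC (ff r1 A1) (ff r2 A2)) (ff r3 1)) := by
    apply supconv_uni (2 * π * (Int.gcd p1 p2 : ℝ) / (q:ℝ)) (2 * π) _
      hc1pos (by positivity) hcpos _ _ _ latO1 latO2 uniH1 (isUni_ff1 r3 hr3) hhO
  refine ⟨_, hcpos, isUni_congr (fun t => ?_) uniM⟩
  -- MF = the double sup-convolution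
  apply le_antisymm
  · unfold MF
    refine csSup_le ⟨_, 0, 0, rfl⟩ ?_
    rintro v ⟨θ1, θ2, rfl⟩
    have e1 : r1 * cos θ1 = ff r1 A1 (-(A1 * θ1)) := by
      show _ = r1 * cos (-(A1 * θ1) / A1)
      rw [show -(A1 * θ1) / A1 = -θ1 by field_simp; try ring, cos_neg]
    have e2 : r2 * cos θ2 = ff r2 A2 (-(A2 * θ2)) := by
      show _ = r2 * cos (-(A2 * θ2) / A2)
      rw [show -(A2 * θ2) / A2 = -θ2 by field_simp; try ring, cos_neg]
    have e3 : r3 * cos (A1 * θ1 + A2 * θ2 + t)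
        = ff r3 1 (t - (-(A1 * θ1) + -(A2 * θ2))) := by
      show _ = r3 * cos ((t - (-(A1 * θ1) + -(A2 * θ2))) / 1)
      rw [show (t - (-(A1 * θ1) + -(A2 * θ2))) / 1 = A1 * θ1 + A2 * θ2 + t by ring]
    have hstep : ff r1 A1 (-(A1 * θ1)) + ff r2 A2 (-(A2 * θ2))
        ≤ SC (ff r1 A1) (ff r2 A2) (-(A1 * θ1) + -(A2 * θ2)) := by
      have h := le_SC (ff r1 A1) (ff r2 A2) r1 r2 hb1 hb2
        (-(A1 * θ1) + -(A2 * θ2)) (-(A1 * θ1))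
      rw [show -(A1 * θ1) + -(A2 * θ2) - -(A1 * θ1) = -(A2 * θ2) by ring] at h
      exact h
    have hstep2 : SC (ff r1 A1) (ff r2 A2) (-(A1 * θ1) + -(A2 * θ2))
        + ff r3 1 (t - (-(A1 * θ1) + -(A2 * θ2)))
        ≤ SC (SC (ff r1 A1) (ff r2 A2)) (ff r3 1) t :=
      le_SC _ _ (r1 + r2) r3 hbH1 hb3 t _
    rw [e1, e2, e3]
    linarith
  · apply SC_le _ _ t
    intro w
    obtain ⟨u, hu_max, hu_eq⟩ := hh1 w
    rw [hu_eq]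
    unfold MF
    apply le_csSup (MF_bddAbove r1 r2 r3 A1 A2 hr1 hr2 hr3 t)
    refine ⟨-(u / A1), -((w - u) / A2), ?_⟩
    have eA : cos (-(u / A1)) = cos (u / A1) := cos_neg _
    have eB : cos (-((w - u) / A2)) = cos ((w - u) / A2) := cos_neg _
    have eC : cos (A1 * -(u / A1) + A2 * -((w - u) / A2) + t) = cos (t - w) := by
      rw [show A1 * -(u / A1) + A2 * -((w - u) / A2) + t = t - w by field_simp; ring]
    rw [eA, eB, eC]
    show ff r1 A1 u + ff r2 A2 (w - u) + ff r3 1 (t - w) = _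
    simp only [ff, div_one]

lemma uni_caseB (r1 r2 r3 : ℝ) (hr1 : 0 < r1) (hr2 : 0 < r2) (hr3 : 0 < r3)
    (A1 : ℝ) (p1 q : ℤ) (hq : 0 < q) (hp1 : p1 ≠ 0) (hA1 : A1 = (p1:ℝ)/(q:ℝ)) :
    ∃ c, 0 < c ∧ IsUni c (MF r1 r2 r3 A1 0) := by
  have hqR : (0:ℝ) < (q:ℝ) := by exact_mod_cast hq
  have hqne : (q:ℝ) ≠ 0 := hqR.ne'
  have hA1ne : A1 ≠ 0 := by rw [hA1]; exact div_ne_zero (Int.cast_ne_zero.mpr hp1) hqne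
  have hb1 : ∀ u, ff r1 A1 u ≤ r1 := ff_le r1 A1 hr1
  have hb3 : ∀ u, ff r3 1 u ≤ r3 := ff_le r3 1 hr3
  have cont1 : Continuous (ff r1 A1) := by unfold ff; fun_prop
  have cont3 : Continuous (ff r3 1) := by unfold ff; fun_prop
  set P := 2 * π * |((p1 : ℤ) : ℝ)| with hPdef
  have hPpos : 0 < P := by
    have : ((p1 : ℤ) : ℝ) ≠ 0 := Int.cast_ne_zero.mpr hp1
    have := abs_pos.mpr this
    have := pi_pos
    positivity
  have per1 : ∀ x, ff r1 A1 (x + P) = ff r1 A1 x := by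
    have h := ff_per_pq r1 p1 q 1 hq hp1 A1 hA1
    rw [show (p1 * 1 : ℤ) = p1 from mul_one _] at h
    exact h
  have per3 : ∀ x, ff r3 1 (x + P) = ff r3 1 x := by
    have h := ff_per_pq r3 1 1 p1 one_pos one_ne_zero 1 (by norm_num)
    rw [show (1 * p1 : ℤ) = p1 from one_mul _] at h
    exact h
  have hh1 := SC_exists_max (ff r1 A1) (ff r3 1) cont1 cont3 P hPpos per1 per3
  have e_a1 : 2 * π * |A1| = 2 * π * |(p1:ℝ)| / (q:ℝ) := by
    rw [hA1, abs_div, abs_of_pos hqR]; ring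
  have uni1 : IsUni (2 * π * |(p1:ℝ)| / (q:ℝ)) (ff r1 A1) := by
    rw [← e_a1]; exact isUni_ff r1 A1 hr1 hA1ne
  have ha1pos : 0 < 2 * π * |(p1:ℝ)| / (q:ℝ) := by
    have : |(p1:ℝ)| > 0 := abs_pos.mpr (Int.cast_ne_zero.mpr hp1)
    have := pi_pos
    positivity
  have eGb : 2 * π * |((q:ℤ):ℝ)| / (q:ℝ) = 2 * π := by
    rw [abs_of_pos hqR]; field_simp
  have lat1 : ∀ m n : ℤ, ∃ k : ℤ,
      (m:ℝ) * (2 * π * |(p1:ℝ)| / (q:ℝ)) + (n:ℝ) * (2 * π)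
        = (k:ℝ) * (2 * π * (Int.gcd p1 q : ℝ) / (q:ℝ)) := by
    intro m n
    obtain ⟨k, hk⟩ := latR1 p1 q q hq m n
    rw [eGb] at hk
    exact ⟨k, hk⟩
  have lat2 : ∀ k : ℤ, ∃ m n : ℤ,
      (k:ℝ) * (2 * π * (Int.gcd p1 q : ℝ) / (q:ℝ))
        = (m:ℝ) * (2 * π * |(p1:ℝ)| / (q:ℝ)) + (n:ℝ) * (2 * π) := by
    intro k
    obtain ⟨m, n, hk⟩ := latR2 p1 q q hq k
    rw [eGb] at hk
    exact ⟨m, n, hk⟩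
  have hcpos : 0 < 2 * π * (Int.gcd p1 q : ℝ) / (q:ℝ) := by
    have hgne : Int.gcd p1 q ≠ 0 := fun h0 => hp1 (Int.gcd_eq_zero_iff.mp h0).1
    have : (0:ℝ) < (Int.gcd p1 q : ℝ) := by exact_mod_cast Nat.pos_of_ne_zero hgne
    have := pi_pos
    positivity
  have uniSC : IsUni (2 * π * (Int.gcd p1 q : ℝ) / (q:ℝ)) (SC (ff r1 A1) (ff r3 1)) := by
    apply supconv_uni (2 * π * |(p1:ℝ)| / (q:ℝ)) (2 * π) _
      ha1pos (by positivity) hcpos _ _ _ lat1 lat2 uni1 (isUni_ff1 r3 hr3) hh1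
  refine ⟨_, hcpos, isUni_congr (fun t => ?_) (uniSC.const_add r2)⟩
  apply le_antisymm
  · unfold MF
    refine csSup_le ⟨_, 0, 0, rfl⟩ ?_
    rintro v ⟨θ1, θ2, rfl⟩
    have e1 : r1 * cos θ1 = ff r1 A1 (-(A1 * θ1)) := by
      show _ = r1 * cos (-(A1 * θ1) / A1)
      rw [show -(A1 * θ1) / A1 = -θ1 by field_simp; try ring, cos_neg]
    have e3 : r3 * cos (A1 * θ1 + 0 * θ2 + t) = ff r3 1 (t - -(A1 * θ1)) := by
      show _ = r3 * cos ((t - -(A1 * θ1)) / 1)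
      rw [show (t - -(A1 * θ1)) / 1 = A1 * θ1 + 0 * θ2 + t by ring]
    have hstep : ff r1 A1 (-(A1 * θ1)) + ff r3 1 (t - -(A1 * θ1))
        ≤ SC (ff r1 A1) (ff r3 1) t := le_SC _ _ r1 r3 hb1 hb3 t _
    have hθ2 : r2 * cos θ2 ≤ r2 := by nlinarith [cos_le_one θ2]
    rw [e1, e3]
    linarith
  · obtain ⟨u, hu_max, hu_eq⟩ := hh1 t
    rw [hu_eq]
    unfold MF
    apply le_csSup (MF_bddAbove r1 r2 r3 A1 0 hr1 hr2 hr3 t)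
    refine ⟨-(u / A1), 0, ?_⟩
    have eA : cos (-(u / A1)) = cos (u / A1) := cos_neg _
    have eC : cos (A1 * -(u / A1) + 0 * 0 + t) = cos (t - u) := by
      rw [show A1 * -(u / A1) + 0 * 0 + t = t - u by field_simp; try ring]
    rw [eA, eC, cos_zero]
    show r2 + (ff r1 A1 u + ff r3 1 (t - u)) = _
    simp only [ff, div_one]
    ring

lemma uni_caseC (r1 r2 r3 : ℝ) (hr1 : 0 < r1) (hr2 : 0 < r2) (hr3 : 0 < r3) :
    ∃ c, 0 < c ∧ IsUni c (MF r1 r2 r3 0 0) := by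
  refine ⟨2 * π, by positivity, isUni_congr (fun t => ?_)
    ((isUni_ff1 r3 hr3).const_add (r1 + r2))⟩
  apply le_antisymm
  · unfold MF
    refine csSup_le ⟨_, 0, 0, rfl⟩ ?_
    rintro v ⟨θ1, θ2, rfl⟩
    have h1 : r1 * cos θ1 ≤ r1 := by nlinarith [cos_le_one θ1]
    have h2 : r2 * cos θ2 ≤ r2 := by nlinarith [cos_le_one θ2]
    have e3 : r3 * cos (0 * θ1 + 0 * θ2 + t) = ff r3 1 t := by
      show _ = r3 * cos (t / 1)
      rw [show t / 1 = 0 * θ1 + 0 * θ2 + t by ring]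
    rw [e3]
    linarith
  · unfold MF
    apply le_csSup (MF_bddAbove r1 r2 r3 0 0 hr1 hr2 hr3 t)
    refine ⟨0, 0, ?_⟩
    show r1 + r2 + ff r3 1 t = _
    simp only [ff, div_one, cos_zero]
    ring_nf

/-- `M t = sup_{θ₁, θ₂ ∈ ℝ} [ r₁ cos θ₁ + r₂ cos θ₂ + r₃ cos(α₁ θ₁ + α₂ θ₂ + t) ]`. -/
def M (r1 r2 r3 : ℝ) (α1 α2 : ℚ) (t : ℝ) : ℝ :=
  sSup {v : ℝ | ∃ θ1 θ2 : ℝ,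
    v = r1 * cos θ1 + r2 * cos θ2 + r3 * cos ((α1 : ℝ) * θ1 + (α2 : ℝ) * θ2 + t)}

lemma M_eq_MF (r1 r2 r3 : ℝ) (α1 α2 : ℚ) :
    M r1 r2 r3 α1 α2 = MF r1 r2 r3 (α1:ℝ) (α2:ℝ) := rfl

lemma exists_uni_M (r1 r2 r3 : ℝ) (hr1 : 0 < r1) (hr2 : 0 < r2) (hr3 : 0 < r3)
    (α1 α2 : ℚ) : ∃ c, 0 < c ∧ IsUni c (M r1 r2 r3 α1 α2) := by
  have hd1 : (0:ℤ) < (α1.den : ℤ) := by exact_mod_cast α1.pos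
  have hd2 : (0:ℤ) < (α2.den : ℤ) := by exact_mod_cast α2.pos
  have hd1R : ((α1.den : ℤ):ℝ) ≠ 0 := by positivity
  have hd2R : ((α2.den : ℤ):ℝ) ≠ 0 := by positivity
  by_cases h1 : α1 = 0 <;> by_cases h2 : α2 = 0
  · obtain ⟨c, hc, huni⟩ := uni_caseC r1 r2 r3 hr1 hr2 hr3
    refine ⟨c, hc, isUni_congr (fun t => ?_) huni⟩
    rw [M_eq_MF, h1, h2]
    norm_num
  · -- α1 = 0, α2 ≠ 0 : swap
    have hp2 : α2.num * (α1.den:ℤ) ≠ 0 :=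
      mul_ne_zero (Rat.num_ne_zero.mpr h2) hd1.ne'
    have hq : (0:ℤ) < (α2.den : ℤ) * (α1.den : ℤ) := mul_pos hd2 hd1
    have hA2 : (α2:ℝ) = ((α2.num * (α1.den:ℤ) : ℤ):ℝ) / (((α2.den:ℤ) * (α1.den:ℤ) : ℤ):ℝ) := by
      rw [Rat.cast_def]; push_cast; field_simp
    obtain ⟨c, hc, huni⟩ := uni_caseB r2 r1 r3 hr2 hr1 hr3 (α2:ℝ) _ _ hq hp2 hA2
    refine ⟨c, hc, isUni_congr (fun t => ?_) huni⟩
    rw [M_eq_MF, MF_swap, h1]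
    norm_num
  · -- α1 ≠ 0, α2 = 0
    have hp1 : α1.num * (α2.den:ℤ) ≠ 0 :=
      mul_ne_zero (Rat.num_ne_zero.mpr h1) hd2.ne'
    have hq : (0:ℤ) < (α1.den : ℤ) * (α2.den : ℤ) := mul_pos hd1 hd2
    have hA1 : (α1:ℝ) = ((α1.num * (α2.den:ℤ) : ℤ):ℝ) / (((α1.den:ℤ) * (α2.den:ℤ) : ℤ):ℝ) := by
      rw [Rat.cast_def]; push_cast; field_simp
    obtain ⟨c, hc, huni⟩ := uni_caseB r1 r2 r3 hr1 hr2 hr3 (α1:ℝ) _ _ hq hp1 hA1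
    refine ⟨c, hc, isUni_congr (fun t => ?_) huni⟩
    rw [M_eq_MF, h2]
    norm_num
  · -- both nonzero
    have hp1 : α1.num * (α2.den:ℤ) ≠ 0 :=
      mul_ne_zero (Rat.num_ne_zero.mpr h1) hd2.ne'
    have hp2 : α2.num * (α1.den:ℤ) ≠ 0 :=
      mul_ne_zero (Rat.num_ne_zero.mpr h2) hd1.ne'
    have hq : (0:ℤ) < (α1.den : ℤ) * (α2.den : ℤ) := mul_pos hd1 hd2
    have hA1 : (α1:ℝ) = ((α1.num * (α2.den:ℤ) : ℤ):ℝ) / (((α1.den:ℤ) * (α2.den:ℤ) : ℤ):ℝ) := by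
      rw [Rat.cast_def]; push_cast; field_simp
    have hA2 : (α2:ℝ) = ((α2.num * (α1.den:ℤ) : ℤ):ℝ) / (((α1.den:ℤ) * (α2.den:ℤ) : ℤ):ℝ) := by
      rw [Rat.cast_def]; push_cast; field_simp
    obtain ⟨c, hc, huni⟩ := uni_caseA r1 r2 r3 hr1 hr2 hr3 (α1:ℝ) (α2:ℝ) _ _ _ hq hp1 hp2 hA1 hA2
    exact ⟨c, hc, by rw [M_eq_MF]; exact huni⟩

theorem stmt3 (r1 r2 r3 : ℝ) (hr1 : 0 < r1) (hr2 : 0 < r2) (hr3 : 0 < r3)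
    (α1 α2 : ℚ) (t0 : ℝ) (δ : ℝ) (hδ : 0 < δ)
    (hloc : ∀ t : ℝ, |t - t0| < δ → M r1 r2 r3 α1 α2 t ≤ M r1 r2 r3 α1 α2 t0) :
    M r1 r2 r3 α1 α2 t0 = r1 + r2 + r3 ∧
    r1 + r2 + r3 = ⨆ t : ℝ, M r1 r2 r3 α1 α2 t := by
  obtain ⟨c, hc, huni⟩ := exists_uni_M r1 r2 r3 hr1 hr2 hr3 α1 α2
  have hMle : ∀ t, M r1 r2 r3 α1 α2 t ≤ r1 + r2 + r3 := by
    intro t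
    rw [M_eq_MF]
    exact MF_le r1 r2 r3 _ _ hr1 hr2 hr3 t
  have hM0 : M r1 r2 r3 α1 α2 0 = r1 + r2 + r3 := by
    apply le_antisymm (hMle 0)
    rw [M_eq_MF]
    apply le_csSup (MF_bddAbove r1 r2 r3 _ _ hr1 hr2 hr3 0)
    exact ⟨0, 0, by norm_num⟩
  have hda0 : da c t0 = 0 := by
    by_contra hne
    have hdpos : 0 < da c t0 := (da_nonneg c t0).lt_of_ne (Ne.symm hne)
    obtain ⟨k, hk⟩ := da_rep c t0
    set d := da c t0 with hd
    set ε := min (δ/2) (d/2) with hεdef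
    have hεpos : 0 < ε := lt_min (by linarith) (by linarith)
    have hεd : ε ≤ d/2 := min_le_right _ _
    have hεδ : ε < δ := lt_of_le_of_lt (min_le_left _ _) (by linarith)
    set s := t0 - (k:ℝ) * c with hs
    have hsabs : |s| = d := hk
    set t := t0 - (ε/d) * s with ht
    have hts : |t - t0| = ε := by
      rw [ht]
      rw [show t0 - (ε/d) * s - t0 = -((ε/d) * s) by ring, abs_neg, abs_mul, hsabs,
        abs_of_nonneg (by positivity : (0:ℝ) ≤ ε/d)]
      field_simp
    have hdat : da c t ≤ d - ε := by
      have h := da_le c t hc k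
      have e : t - (k:ℝ) * c = (1 - ε/d) * s := by rw [ht, hs]; ring
      rw [e, abs_mul, hsabs] at h
      have h1ed : (0:ℝ) ≤ 1 - ε/d := by
        rw [sub_nonneg, div_le_one hdpos]; linarith
      rw [abs_of_nonneg h1ed] at h
      have : (1 - ε/d) * d = d - ε := by field_simp
      rw [this] at h
      exact h
    have hstrict : da c t < da c t0 := lt_of_le_of_lt hdat (by rw [← hd]; linarith)
    have h1 := huni.strict hstrict
    have h2 := hloc t (by rw [hts]; exact hεδ)
    linarith
  have hda00 : da c (0:ℝ) = 0 := by
    have h := da_le c 0 hc 0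
    have h2 := da_nonneg c 0
    simp at h
    linarith
  have h0eq : M r1 r2 r3 α1 α2 t0 = M r1 r2 r3 α1 α2 0 := by
    apply le_antisymm
    · exact huni.mono (le_of_eq (hda00.trans hda0.symm))
    · exact huni.mono (le_of_eq (hda0.trans hda00.symm))
  constructor
  · rw [h0eq, hM0]
  · apply le_antisymm
    · rw [← hM0]
      exact le_ciSup ⟨r1 + r2 + r3, by rintro v ⟨t, rfl⟩; exact hMle t⟩ 0
    · exact ciSup_le hMle
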